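/- In the polynomial ring ℚ(x)[Ax1, Axu] localized appropriately (equivalently: for all x, u with u^2*x - u + 1 ≠ 0 and x ≠ 0), the system consisting of the kernel equation (u - 1)*Axu - Axu*u^2*x + Ax1*u*x - u + 1 = 0, valid for all u, implies Ax1^2*x - Ax1 + 1 = 0. -/

import Mathlib

theorem stmt_6 (x : ℂ) (hx : x ≠ 0) (Ax1 : ℂ) (Axu : ℂ → ℂ)
    (hker : ∀ u : ℂ, (u - 1) * Axu u - Axu u * u^2 * x + Ax1 * u * x - u + 1 = 0) :
    Ax1^2 * x - Ax1 + 1 = 0 := by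
  obtain ⟨s, hs⟩ := IsAlgClosed.exists_pow_nat_eq (1 - 4*x) (n := 2) (by norm_num)
  set u : ℂ := (1 + s) / (2 * x) with hu
  have h2x : (2 * x) ≠ 0 := by simpa using hx
  have hroot : u ^ 2 * x - u + 1 = 0 := by
    rw [hu]
    field_simp
    ring_nf
    linear_combination hs
  have hu0 : u ≠ 0 := by
    intro h
    rw [h] at hroot
    simp at hroot
  have hk : Ax1 * u * x - u + 1 = 0 := by
    linear_combination hker u + Axu u * hroot
  have hAx : (Ax1 - u) * (u * x) = 0 := by linear_combination hk - hroot
  rcases mul_eq_zero.1 hAx with h | h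
  · rw [sub_eq_zero.1 h]
    linear_combination hroot
  · exact absurd h (mul_ne_zero hu0 hx)
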